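/- Let T: M_ℓ(ℂ) → M_ℓ(ℂ) be the elementary operator Tx = Σⱼ aⱼ x bⱼ where aⱼ = η ⊗ ξⱼ* and bⱼ = ηⱼ ⊗ η* are rank-one operators built from a fixed unit vector η ∈ ℂ^ℓ and vectors ξⱼ, ηⱼ ∈ ℂ^ℓ. Then the operator norm of T equals tgm(X, Y), where X = (⟨ξⱼ, ξᵢ⟩)ᵢⱼ and Y = (⟨ηᵢ, ηⱼ⟩)ᵢⱼᵗ are the associated Gram-type matrices Q(a*, η) and Q(b, η). -/

import Mathlib

open Matrix
open scoped ComplexOrder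

/-- The square root of a positive semidefinite matrix, as defined in Mathlib (Dec 2024)
under the same name `Matrix.PosSemidef.sqrt` (removed since). -/
noncomputable def Matrix.PosSemidef.sqrt {n 𝕜 : Type*} [Fintype n] [DecidableEq n] [RCLike 𝕜]
    {A : Matrix n n 𝕜} (hA : A.PosSemidef) : Matrix n n 𝕜 :=
  hA.1.eigenvectorUnitary.1 * diagonal ((↑) ∘ (fun x : ℝ => √x) ∘ hA.1.eigenvalues) *
  (star hA.1.eigenvectorUnitary : Matrix n n 𝕜)

theorem Matrix.PosSemidef.posSemidef_sqrt {n 𝕜 : Type*} [Fintype n] [DecidableEq n] [RCLike 𝕜]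
    {A : Matrix n n 𝕜} (hA : A.PosSemidef) : hA.sqrt.PosSemidef := by
  have hd : (diagonal ((↑) ∘ (fun x : ℝ => √x) ∘ hA.1.eigenvalues) : Matrix n n 𝕜).PosSemidef :=
    Matrix.PosSemidef.diagonal (fun i => by
      simp only [Function.comp_apply]
      exact RCLike.ofReal_nonneg.mpr (Real.sqrt_nonneg _))
  have := hd.mul_mul_conjTranspose_same (hA.1.eigenvectorUnitary.1)
  simpa [Matrix.PosSemidef.sqrt, Matrix.star_eq_conjTranspose] using this

/-- The product `√X * Y * √X` is positive semidefinite. -/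
theorem sqrt_mul_mul_sqrt_posSemidef {n : Type*} [Fintype n] [DecidableEq n]
    {X Y : Matrix n n ℂ} (hX : X.PosSemidef) (hY : Y.PosSemidef) :
    (hX.sqrt * Y * hX.sqrt).PosSemidef := by
  have h := hY.conjTranspose_mul_mul_same (B := hX.sqrt)
  rwa [hX.posSemidef_sqrt.isHermitian.eq] at h

/-- The tracial geometric mean `tgm(X,Y) = trace √(√X·Y·√X)`. -/
noncomputable def tgm {n : Type*} [Fintype n] [DecidableEq n]
    {X Y : Matrix n n ℂ} (hX : X.PosSemidef) (hY : Y.PosSemidef) : ℝ :=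
  ((sqrt_mul_mul_sqrt_posSemidef hX hY).sqrt.trace).re

theorem Matrix.PosSemidef.sqrt_mul_self {n 𝕜 : Type*} [Fintype n] [DecidableEq n] [RCLike 𝕜]
    {A : Matrix n n 𝕜} (hA : A.PosSemidef) : hA.sqrt * hA.sqrt = A := by
  have hs := hA.1.spectral_theorem
  rw [Unitary.conjStarAlgAut_apply] at hs
  refine Eq.trans ?_ hs.symm
  have hU : (star hA.1.eigenvectorUnitary : Matrix n n 𝕜) * hA.1.eigenvectorUnitary.1 = 1 := by
    exact Unitary.coe_star_mul_self _
  have e : ∀ (U D S : Matrix n n 𝕜), S * U = 1 → U * D * S * (U * D * S) = U * (D * D) * S := by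
    intro U D S h
    calc U * D * S * (U * D * S) = U * D * (S * U) * D * S := by simp only [Matrix.mul_assoc]
      _ = _ := by rw [h, Matrix.mul_one, Matrix.mul_assoc U D D]
  have hd : (diagonal ((↑) ∘ (fun x : ℝ => √x) ∘ hA.1.eigenvalues) : Matrix n n 𝕜) *
      diagonal ((↑) ∘ (fun x : ℝ => √x) ∘ hA.1.eigenvalues) =
      diagonal (RCLike.ofReal ∘ hA.1.eigenvalues) := by
    rw [diagonal_mul_diagonal]
    congr 1
    funext i
    simp only [Function.comp_apply]
    rw [← RCLike.ofReal_mul, Real.mul_self_sqrt (hA.eigenvalues_nonneg i)]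
  simp only [Matrix.PosSemidef.sqrt]
  rw [e _ _ _ hU, hd]

section Aux

open Polynomial

variable {n : Type*} [Fintype n] [DecidableEq n]

lemma trace_sqrt_eq' {P : Matrix n n ℂ} (hP : P.PosSemidef) :
    hP.sqrt.trace = ∑ i, (Real.sqrt (hP.1.eigenvalues i) : ℂ) := by
  rw [Matrix.PosSemidef.sqrt, Matrix.trace_mul_cycle, Matrix.mul_assoc, ← Matrix.mul_assoc,
    Unitary.coe_star_mul_self, Matrix.one_mul, Matrix.trace_diagonal]
  rfl

lemma det_smul_one_sub_mul_comm' (A B : Matrix n n ℂ) (z : ℂ) :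
    (z • 1 - A * B).det = (z • 1 - B * A).det := by
  rcases eq_or_ne z 0 with rfl | hz
  · simp [Matrix.det_mul_comm A B, Matrix.det_neg]
  · have h1 : z • (1 : Matrix n n ℂ) - A * B = z • (1 + ((-z⁻¹) • A) * B) := by
      rw [Matrix.smul_mul, smul_add, smul_smul, mul_neg, mul_inv_cancel₀ hz, neg_one_smul,
        sub_eq_add_neg]
    have h2 : z • (1 : Matrix n n ℂ) - B * A = z • (1 + B * ((-z⁻¹) • A)) := by
      rw [Matrix.mul_smul, smul_add, smul_smul, mul_neg, mul_inv_cancel₀ hz, neg_one_smul,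
        sub_eq_add_neg]
    rw [h1, h2, Matrix.det_smul, Matrix.det_smul, Matrix.det_one_add_mul_comm]

lemma det_smul_one_sub_eq_prod' {P : Matrix n n ℂ} (hP : P.IsHermitian) (z : ℂ) :
    (z • 1 - P).det = ∏ i, (z - (hP.eigenvalues i : ℂ)) := by
  set U : Matrix n n ℂ := (hP.eigenvectorUnitary : Matrix n n ℂ) with hUdef
  have hU : U * star U = 1 := Unitary.coe_mul_star_self _
  have key : z • (1 : Matrix n n ℂ) - P
      = U * (z • 1 - diagonal ((↑) ∘ hP.eigenvalues)) * star U := by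
    rw [Matrix.mul_sub, Matrix.sub_mul, Matrix.mul_smul, Matrix.smul_mul, Matrix.mul_one, hU]
    congr 1
    have hs := hP.spectral_theorem
    rw [Unitary.conjStarAlgAut_apply] at hs
    exact hs
  rw [key, Matrix.det_mul, Matrix.det_mul, mul_comm (U.det),
    mul_assoc, ← Matrix.det_mul, hU, Matrix.det_one, mul_one,
    Matrix.smul_one_eq_diagonal, Matrix.diagonal_sub, Matrix.det_diagonal]
  rfl

lemma sum_sqrt_eig_eq_of_det' {P Q : Matrix n n ℂ} (hP : P.IsHermitian) (hQ : Q.IsHermitian)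
    (h : ∀ z : ℂ, (z • 1 - P).det = (z • 1 - Q).det) :
    ∑ i, Real.sqrt (hP.eigenvalues i) = ∑ i, Real.sqrt (hQ.eigenvalues i) := by
  have heval : ∀ (f : n → ℂ) (r : ℂ),
      Polynomial.eval r ((Finset.univ.val.map (fun i => f i)).map (fun a => X - C a)).prod
        = ∏ i, (r - f i) := by
    intro f r
    rw [Polynomial.eval_multiset_prod, Multiset.map_map, Multiset.map_map,
      Finset.prod_eq_multiset_prod]
    congr 1
    apply Multiset.map_congr rfl
    intro i _
    simp
  have hpoly : (Finset.univ.val.map (fun i => ((hP.eigenvalues i : ℂ))))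
      = (Finset.univ.val.map (fun i => ((hQ.eigenvalues i : ℂ)))) := by
    have hfun := Polynomial.funext (R := ℂ)
      (p := ((Finset.univ.val.map (fun i => ((hP.eigenvalues i : ℂ)))).map
        (fun a => X - C a)).prod)
      (q := ((Finset.univ.val.map (fun i => ((hQ.eigenvalues i : ℂ)))).map
        (fun a => X - C a)).prod) ?_
    · have h1 := Polynomial.roots_multiset_prod_X_sub_C
        (Finset.univ.val.map (fun i => ((hP.eigenvalues i : ℂ))))
      have h2 := Polynomial.roots_multiset_prod_X_sub_C
        (Finset.univ.val.map (fun i => ((hQ.eigenvalues i : ℂ))))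
      rw [← h1, ← h2, hfun]
    · intro r
      rw [heval, heval, ← det_smul_one_sub_eq_prod' hP r, ← det_smul_one_sub_eq_prod' hQ r]
      exact h r
  have h2 := congrArg (fun s : Multiset ℂ => (s.map (fun z => Real.sqrt z.re)).sum) hpoly
  simp only [Multiset.map_map, Function.comp] at h2
  rw [Finset.sum_eq_multiset_sum, Finset.sum_eq_multiset_sum]
  simpa using h2

lemma euc_sum_apply' {m : ℕ} {α : Type*} [DecidableEq α] (s : Finset α)
    (g : α → EuclideanSpace ℂ (Fin m)) (q : Fin m) :
    (∑ j ∈ s, g j) q = ∑ j ∈ s, g j q := by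
  induction s using Finset.induction with
  | empty => rfl
  | insert _ _ h ih => rw [Finset.sum_insert h, Finset.sum_insert h, ← ih]; rfl

end Aux

set_option maxHeartbeats 1000000 in
set_option synthInstance.maxHeartbeats 400000 in
/-- For the elementary operator `Tx = Σⱼ aⱼ x bⱼ` on `M_ℓ(ℂ)` (acting on `ℂ^ℓ` as
`EuclideanSpace ℂ (Fin ℓ)`) built from rank-one operators `aⱼ = η ⊗ ξⱼ*` and
`bⱼ = ηⱼ ⊗ η*` with `‖η‖ = 1`, the operator norm of `T` equals `tgm(X, Y)`, where
`X = Q(a*, η) = (⟨ξⱼ, ξᵢ⟩)ᵢⱼ` and `Y = Q(b, η) = (⟨ηᵢ, ηⱼ⟩)ᵢⱼᵗ`. -/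
theorem norm_rankOne_elementary_eq_tgm {ℓ : ℕ}
    (η : EuclideanSpace ℂ (Fin ℓ)) (hη : ‖η‖ = 1)
    (ξ ζ : Fin ℓ → EuclideanSpace ℂ (Fin ℓ))
    {X Y : Matrix (Fin ℓ) (Fin ℓ) ℂ}
    (hXeq : X = Matrix.of fun i j => (inner ℂ (ξ i) (ξ j) : ℂ))
    (hYeq : Y = Matrix.of fun i j => (inner ℂ (ζ i) (ζ j) : ℂ))
    (hX : X.PosSemidef) (hY : Y.PosSemidef) :
    sSup {r : ℝ | ∃ x : EuclideanSpace ℂ (Fin ℓ) →L[ℂ] EuclideanSpace ℂ (Fin ℓ),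
        ‖x‖ ≤ 1 ∧ r = ‖∑ j, (((innerSL ℂ (ξ j)).smulRight η).comp
          (x.comp ((innerSL ℂ η).smulRight (ζ j))))‖} = tgm hX hY := by
  classical
  obtain ⟨Ξ, hΞdef⟩ : ∃ Ξ : Matrix (Fin ℓ) (Fin ℓ) ℂ, Ξ = Matrix.of fun k j => ξ j k := ⟨_, rfl⟩
  obtain ⟨Z, hZdef⟩ : ∃ Z : Matrix (Fin ℓ) (Fin ℓ) ℂ, Z = Matrix.of fun k j => ζ j k := ⟨_, rfl⟩
  obtain ⟨M, hMdef⟩ : ∃ M : Matrix (Fin ℓ) (Fin ℓ) ℂ, M = Z * Ξᴴ := ⟨_, rfl⟩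
  have hMapp : ∀ p q, M p q = ∑ j, ζ j p * (starRingEnd ℂ) (ξ j q) := by
    intro p q
    simp [hMdef, Matrix.mul_apply, hΞdef, hZdef, Matrix.conjTranspose_apply]
  have hH : (M * Mᴴ).IsHermitian := Matrix.isHermitian_mul_conjTranspose_self M
  have hPSD : (M * Mᴴ).PosSemidef := Matrix.posSemidef_self_mul_conjTranspose M
  obtain ⟨μ, hμdef⟩ : ∃ μ : Fin ℓ → ℝ, μ = hH.eigenvalues := ⟨_, rfl⟩
  have hμ0 : ∀ i, 0 ≤ μ i := fun i => hμdef ▸ hPSD.eigenvalues_nonneg i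
  obtain ⟨v, hvdef⟩ : ∃ v : OrthonormalBasis (Fin ℓ) ℂ (EuclideanSpace ℂ (Fin ℓ)),
      v = hH.eigenvectorBasis := ⟨_, rfl⟩
  have hvo : ∀ i k, (inner ℂ (v i) (v k) : ℂ) = if i = k then 1 else 0 :=
    orthonormal_iff_ite.mp v.orthonormal
  have hvn : ∀ i, ‖v i‖ = 1 := fun i => v.orthonormal.1 i
  have hveig : ∀ k, (M * Mᴴ) *ᵥ ⇑(v k) = μ k • ⇑(v k) := by
    intro k
    rw [hvdef, hμdef]
    exact hH.mulVec_eigenvectorBasis k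
  obtain ⟨w, hwdef⟩ : ∃ w : Fin ℓ → EuclideanSpace ℂ (Fin ℓ),
      w = fun i => ∑ j, (inner ℂ (ζ j) (v i) : ℂ) • ξ j := ⟨_, rfl⟩
  have hwM : ∀ i, ⇑(w i) = Mᴴ *ᵥ ⇑(v i) := by
    intro i
    funext q
    rw [hwdef]
    show (∑ j, (inner ℂ (ζ j) (v i) : ℂ) • ξ j : EuclideanSpace ℂ (Fin ℓ)) q
      = (Mᴴ *ᵥ ⇑(v i)) q
    rw [euc_sum_apply']
    have hstar : ∀ p, star (M p q) = ∑ j, (starRingEnd ℂ) (ζ j p) * ξ j q := by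
      intro p
      rw [hMapp]
      rw [star_sum]
      apply Finset.sum_congr rfl
      intro j _
      rw [star_mul', show star ((starRingEnd ℂ) (ξ j q)) = ξ j q from star_star _]
      rfl
    have hRHS : (Mᴴ *ᵥ ⇑(v i)) q = ∑ p, (∑ j, (starRingEnd ℂ) (ζ j p) * ξ j q) * v i p := by
      simp only [Matrix.mulVec, dotProduct, Matrix.conjTranspose_apply]
      apply Finset.sum_congr rfl
      intro p _
      rw [hstar p]
    rw [hRHS]
    have hL : ∀ j, ((inner ℂ (ζ j) (v i) : ℂ) • ξ j : EuclideanSpace ℂ (Fin ℓ)) q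
        = ∑ p, (starRingEnd ℂ) (ζ j p) * v i p * ξ j q := by
      intro j
      rw [PiLp.smul_apply, smul_eq_mul, PiLp.inner_apply]
      simp only [RCLike.inner_apply, Finset.sum_mul]
      exact Finset.sum_congr rfl fun _ _ => by ring
    rw [Finset.sum_congr rfl (fun j _ => hL j), Finset.sum_comm]
    apply Finset.sum_congr rfl
    intro p _
    rw [Finset.sum_mul]
    apply Finset.sum_congr rfl
    intro j _
    ring
  have hw_expand : ∀ i (u : EuclideanSpace ℂ (Fin ℓ)),
      (inner ℂ (w i) u : ℂ) = ∑ j, (inner ℂ (v i) (ζ j) : ℂ) * (inner ℂ (ξ j) u : ℂ) := by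
    intro i u
    rw [hwdef]
    rw [sum_inner]
    apply Finset.sum_congr rfl
    intro j _
    rw [inner_smul_left, inner_conj_symm]
  have hinner_w : ∀ i k, (inner ℂ (w i) (w k) : ℂ) = if i = k then (μ k : ℂ) else 0 := by
    intro i k
    rw [EuclideanSpace.inner_eq_star_dotProduct]
    rw [dotProduct_comm]
    show star ⇑(w i) ⬝ᵥ ⇑(w k) = _
    rw [hwM i, hwM k, Matrix.star_mulVec, Matrix.conjTranspose_conjTranspose,
      ← Matrix.dotProduct_mulVec, Matrix.mulVec_mulVec, hveig k]
    rw [dotProduct_smul]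
    have hvv : star ⇑(v i) ⬝ᵥ ⇑(v k) = (inner ℂ (v i) (v k) : ℂ) :=
      by rw [EuclideanSpace.inner_eq_star_dotProduct, dotProduct_comm]
    rw [hvv, hvo i k]
    by_cases h : i = k <;> simp [h, RCLike.real_smul_eq_coe_mul]
  have hnorm_w : ∀ i, ‖w i‖ = Real.sqrt (μ i) := by
    intro i
    have h1 : (inner ℂ (w i) (w i) : ℂ) = (μ i : ℂ) := by rw [hinner_w i i]; simp
    rw [inner_self_eq_norm_sq_to_K] at h1
    have h2 : ‖w i‖ ^ 2 = μ i := by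
      have := congrArg Complex.re h1
      simpa [← Complex.ofReal_pow] using this
    rw [← h2, Real.sqrt_sq (norm_nonneg _)]
  obtain ⟨Φ, hΦdef⟩ : ∃ Φ : (EuclideanSpace ℂ (Fin ℓ) →L[ℂ] EuclideanSpace ℂ (Fin ℓ)) → ℂ,
      Φ = fun x => ∑ j, (inner ℂ (ξ j) (x (ζ j)) : ℂ) := ⟨_, rfl⟩
  have hΦ : ∀ x, Φ x = ∑ i, (inner ℂ (w i) (x (v i)) : ℂ) := by
    intro x
    have hrepr : ∀ j, x (ζ j) = ∑ i, (inner ℂ (v i) (ζ j) : ℂ) • x (v i) := by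
      intro j
      conv_lhs => rw [← v.sum_repr' (ζ j)]
      rw [map_sum]
      simp only [ContinuousLinearMap.map_smul]
    rw [hΦdef]
    calc ∑ j, (inner ℂ (ξ j) (x (ζ j)) : ℂ)
        = ∑ j, ∑ i, (inner ℂ (v i) (ζ j) : ℂ) * (inner ℂ (ξ j) (x (v i)) : ℂ) := by
          apply Finset.sum_congr rfl
          intro j _
          rw [hrepr j, inner_sum]
          apply Finset.sum_congr rfl
          intro i _
          rw [inner_smul_right]
      _ = ∑ i, ∑ j, (inner ℂ (v i) (ζ j) : ℂ) * (inner ℂ (ξ j) (x (v i)) : ℂ) := Finset.sum_comm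
      _ = ∑ i, (inner ℂ (w i) (x (v i)) : ℂ) := by
          apply Finset.sum_congr rfl
          intro i _
          rw [hw_expand i (x (v i))]
  obtain ⟨t, htdef⟩ : ∃ t : ℝ, t = ∑ i, Real.sqrt (μ i) := ⟨_, rfl⟩
  have ht0 : 0 ≤ t := htdef ▸ Finset.sum_nonneg fun i _ => Real.sqrt_nonneg _
  have hub : ∀ x : EuclideanSpace ℂ (Fin ℓ) →L[ℂ] EuclideanSpace ℂ (Fin ℓ),
      ‖x‖ ≤ 1 → ‖Φ x‖ ≤ t := by
    intro x hx
    rw [hΦ x, htdef]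
    refine (norm_sum_le _ _).trans ?_
    apply Finset.sum_le_sum
    intro i _
    calc ‖(inner ℂ (w i) (x (v i)) : ℂ)‖ ≤ ‖w i‖ * ‖x (v i)‖ := norm_inner_le_norm _ _
      _ ≤ ‖w i‖ * 1 := by
          apply mul_le_mul_of_nonneg_left _ (norm_nonneg _)
          calc ‖x (v i)‖ ≤ ‖x‖ * ‖v i‖ := x.le_opNorm _
            _ ≤ 1 := by rw [hvn i, mul_one]; exact hx
      _ = Real.sqrt (μ i) := by rw [mul_one, hnorm_w i]
  have hT : ∀ x : EuclideanSpace ℂ (Fin ℓ) →L[ℂ] EuclideanSpace ℂ (Fin ℓ),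
      (∑ j, (((innerSL ℂ (ξ j)).smulRight η).comp
          (x.comp ((innerSL ℂ η).smulRight (ζ j)))))
        = Φ x • ((innerSL ℂ η).smulRight η) := by
    intro x
    refine ContinuousLinearMap.ext fun u => ?_
    simp only [ContinuousLinearMap.sum_apply, ContinuousLinearMap.comp_apply,
      ContinuousLinearMap.smulRight_apply, innerSL_apply_apply, ContinuousLinearMap.map_smul,
      inner_smul_right, smul_smul, ContinuousLinearMap.smul_apply, hΦdef,
      Finset.sum_smul]
    apply Finset.sum_congr rfl
    intro j _
    rw [mul_comm]
  have hTnorm : ∀ x : EuclideanSpace ℂ (Fin ℓ) →L[ℂ] EuclideanSpace ℂ (Fin ℓ),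
      ‖∑ j, (((innerSL ℂ (ξ j)).smulRight η).comp
          (x.comp ((innerSL ℂ η).smulRight (ζ j))))‖ = ‖Φ x‖ := by
    intro x
    rw [hT x, norm_smul (Φ x) (((innerSL ℂ) η).smulRight η),
      ContinuousLinearMap.norm_smulRight_apply, innerSL_apply_norm, hη, one_mul, mul_one]
  obtain ⟨c, hcdef⟩ : ∃ c : Fin ℓ → ℝ,
      c = fun i => if μ i = 0 then 0 else (Real.sqrt (μ i))⁻¹ := ⟨_, rfl⟩
  have hcμ : ∀ i, c i * μ i = Real.sqrt (μ i) := by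
    intro i
    rw [hcdef]
    by_cases h : μ i = 0
    · simp [h]
    · simp only [h, if_false]
      have hs : Real.sqrt (μ i) ≠ 0 :=
        Real.sqrt_ne_zero'.mpr (lt_of_le_of_ne (hμ0 i) (Ne.symm h))
      rw [inv_mul_eq_div, Real.div_sqrt]
  have hc2μ : ∀ i, c i ^ 2 * μ i ≤ 1 := by
    intro i
    rw [hcdef]
    by_cases h : μ i = 0
    · simp [h]
    · simp only [h, if_false]
      have hs : Real.sqrt (μ i) ≠ 0 :=
        Real.sqrt_ne_zero'.mpr (lt_of_le_of_ne (hμ0 i) (Ne.symm h))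
      rw [inv_pow, Real.sq_sqrt (hμ0 i), inv_mul_cancel₀ h]
  obtain ⟨x₀, hx₀def⟩ : ∃ x₀ : EuclideanSpace ℂ (Fin ℓ) →L[ℂ] EuclideanSpace ℂ (Fin ℓ),
      x₀ = ∑ i, (c i : ℂ) • ((innerSL ℂ (v i)).smulRight (w i)) := ⟨_, rfl⟩
  have hx₀_apply : ∀ u, x₀ u = ∑ i, ((c i : ℂ) * (inner ℂ (v i) u : ℂ)) • w i := by
    intro u
    rw [hx₀def]
    simp only [ContinuousLinearMap.sum_apply, ContinuousLinearMap.smul_apply,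
      ContinuousLinearMap.smulRight_apply, innerSL_apply_apply, smul_smul]
  have hΦx₀ : Φ x₀ = (t : ℂ) := by
    rw [hΦ x₀]
    have hterm : ∀ i, (inner ℂ (w i) (x₀ (v i)) : ℂ) = ((Real.sqrt (μ i) : ℝ) : ℂ) := by
      intro i
      rw [hx₀_apply (v i), inner_sum]
      have hite : ∀ k, (inner ℂ (w i) (((c k : ℂ) * (inner ℂ (v k) (v i) : ℂ)) • w k) : ℂ)
          = if k = i then ((c i : ℂ) * (μ i : ℂ)) else 0 := by
        intro k
        rw [inner_smul_right, hvo k i, hinner_w i k]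
        by_cases h : k = i
        · subst h; simp
        · have h' : ¬ (i = k) := fun hh => h hh.symm
          simp [h, h']
      rw [Finset.sum_congr rfl (fun k _ => hite k), Finset.sum_ite_eq' Finset.univ i
        (fun _ => (c i : ℂ) * (μ i : ℂ))]
      simp only [Finset.mem_univ, if_true]
      rw [← Complex.ofReal_mul, hcμ i]
    rw [Finset.sum_congr rfl (fun i _ => hterm i), htdef]
    push_cast
    ring
  have hx₀norm : ‖x₀‖ ≤ 1 := by
    apply ContinuousLinearMap.opNorm_le_bound _ zero_le_one
    intro u
    rw [one_mul]
    have key : ‖x₀ u‖ ^ 2 ≤ ‖u‖ ^ 2 := by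
      have hxu : (inner ℂ (x₀ u) (x₀ u) : ℂ)
          = ∑ i, ((‖(inner ℂ (v i) u : ℂ)‖ ^ 2 * (c i ^ 2 * μ i) : ℝ) : ℂ) := by
        rw [hx₀_apply u, sum_inner]
        apply Finset.sum_congr rfl
        intro i _
        rw [inner_smul_left, inner_sum]
        have hite : ∀ k, (inner ℂ (w i) (((c k : ℂ) * (inner ℂ (v k) u : ℂ)) • w k) : ℂ)
            = if k = i then ((c i : ℂ) * (inner ℂ (v i) u : ℂ) * (μ i : ℂ)) else 0 := by
          intro k
          rw [inner_smul_right, hinner_w i k]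
          by_cases h : k = i
          · subst h; simp [mul_comm]
          · have h' : ¬ (i = k) := fun hh => h hh.symm
            simp [h, h']
        rw [Finset.sum_congr rfl (fun k _ => hite k), Finset.sum_ite_eq' Finset.univ i
          (fun _ => (c i : ℂ) * (inner ℂ (v i) u : ℂ) * (μ i : ℂ))]
        simp only [Finset.mem_univ, if_true]
        have hconj : (starRingEnd ℂ) ((c i : ℂ) * (inner ℂ (v i) u : ℂ))
            = (c i : ℂ) * (starRingEnd ℂ) (inner ℂ (v i) u : ℂ) := by
          rw [_root_.map_mul, Complex.conj_ofReal]
        rw [hconj]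
        have habs : (starRingEnd ℂ) (inner ℂ (v i) u : ℂ) * (inner ℂ (v i) u : ℂ)
            = ((‖(inner ℂ (v i) u : ℂ)‖ ^ 2 : ℝ) : ℂ) := by
          rw [← Complex.normSq_eq_conj_mul_self]
          norm_cast
          simp [Complex.normSq_eq_norm_sq]
        calc (c i : ℂ) * (starRingEnd ℂ) (inner ℂ (v i) u : ℂ)
              * ((c i : ℂ) * (inner ℂ (v i) u : ℂ) * (μ i : ℂ))
            = ((starRingEnd ℂ) (inner ℂ (v i) u : ℂ) * (inner ℂ (v i) u : ℂ))
              * ((c i : ℂ) ^ 2 * (μ i : ℂ)) := by ring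
          _ = ((‖(inner ℂ (v i) u : ℂ)‖ ^ 2 * (c i ^ 2 * μ i) : ℝ) : ℂ) := by
              rw [habs]
              push_cast
              ring
      rw [inner_self_eq_norm_sq_to_K] at hxu
      have hxu' : ‖x₀ u‖ ^ 2 = ∑ i, ‖(inner ℂ (v i) u : ℂ)‖ ^ 2 * (c i ^ 2 * μ i) := by
        rw [← Complex.ofReal_sum] at hxu
        have h2 := congrArg Complex.re hxu
        simpa [← Complex.ofReal_pow] using h2
      rw [hxu']
      have hupar : ∑ i, ‖(inner ℂ (v i) u : ℂ)‖ ^ 2 = ‖u‖ ^ 2 := by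
        have h1 : ‖u‖ = ‖v.repr u‖ := (v.repr.norm_map u).symm
        rw [h1, EuclideanSpace.norm_eq, Real.sq_sqrt (Finset.sum_nonneg fun i _ => sq_nonneg _)]
        apply Finset.sum_congr rfl
        intro i _
        rw [v.repr_apply_apply]
      rw [← hupar]
      apply Finset.sum_le_sum
      intro i _
      calc ‖(inner ℂ (v i) u : ℂ)‖ ^ 2 * (c i ^ 2 * μ i) ≤ ‖(inner ℂ (v i) u : ℂ)‖ ^ 2 * 1 :=
            mul_le_mul_of_nonneg_left (hc2μ i) (sq_nonneg _)
        _ = ‖(inner ℂ (v i) u : ℂ)‖ ^ 2 := mul_one _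
    nlinarith [norm_nonneg (x₀ u), norm_nonneg u, sq_nonneg (‖x₀ u‖ - ‖u‖),
      sq_nonneg (‖x₀ u‖ + ‖u‖)]
  have hgreat : IsGreatest {r : ℝ | ∃ x : EuclideanSpace ℂ (Fin ℓ) →L[ℂ] EuclideanSpace ℂ (Fin ℓ),
      ‖x‖ ≤ 1 ∧ r = ‖∑ j, (((innerSL ℂ (ξ j)).smulRight η).comp
        (x.comp ((innerSL ℂ η).smulRight (ζ j))))‖} t := by
    constructor
    · refine ⟨x₀, hx₀norm, ?_⟩
      rw [hTnorm, hΦx₀, Complex.norm_real, Real.norm_of_nonneg ht0]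
    · rintro r ⟨x, hx, rfl⟩
      rw [hTnorm]
      exact hub x hx
  rw [hgreat.csSup_eq]
  -- bridge to tgm
  have hXf : X = Ξᴴ * Ξ := by
    rw [hXeq]
    ext i j
    simp [Matrix.mul_apply, hΞdef, Matrix.conjTranspose_apply, PiLp.inner_apply,
      RCLike.inner_apply]
    exact Finset.sum_congr rfl fun _ _ => mul_comm _ _
  have hYf : Y = Zᴴ * Z := by
    rw [hYeq]
    ext i j
    simp [Matrix.mul_apply, hZdef, Matrix.conjTranspose_apply, PiLp.inner_apply,
      RCLike.inner_apply]
    exact Finset.sum_congr rfl fun _ _ => mul_comm _ _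
  obtain ⟨Cm, hCmdef⟩ : ∃ Cm : Matrix (Fin ℓ) (Fin ℓ) ℂ, Cm = Z * hX.sqrt := ⟨_, rfl⟩
  have hsh : hX.sqrt.conjTranspose = hX.sqrt := hX.posSemidef_sqrt.1
  have hQeq : hX.sqrt * Y * hX.sqrt = Cmᴴ * Cm := by
    rw [hCmdef, Matrix.conjTranspose_mul, hsh, hYf, Matrix.mul_assoc, Matrix.mul_assoc,
      Matrix.mul_assoc]
  have hMC : M * Mᴴ = Cm * Cmᴴ := by
    rw [hCmdef, Matrix.conjTranspose_mul, hsh, hMdef, Matrix.conjTranspose_mul,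
      Matrix.conjTranspose_conjTranspose]
    calc Z * Ξᴴ * (Ξ * Zᴴ) = Z * (Ξᴴ * Ξ) * Zᴴ := by
          simp only [Matrix.mul_assoc]
      _ = Z * (hX.sqrt * hX.sqrt) * Zᴴ := by
          have hmid : hX.sqrt * hX.sqrt = Ξᴴ * Ξ := hX.sqrt_mul_self.trans hXf
          rw [← hmid]
      _ = Z * hX.sqrt * (hX.sqrt * Zᴴ) := by
          simp only [Matrix.mul_assoc]
  have hdet : ∀ z : ℂ, (z • 1 - (M * Mᴴ)).det
      = (z • 1 - (hX.sqrt * Y * hX.sqrt)).det := by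
    intro z
    rw [hMC, hQeq]
    exact det_smul_one_sub_mul_comm' Cm Cmᴴ z
  have hsum := sum_sqrt_eig_eq_of_det' hH (sqrt_mul_mul_sqrt_posSemidef hX hY).1 hdet
  have htgm : tgm hX hY
      = ∑ i, Real.sqrt ((sqrt_mul_mul_sqrt_posSemidef hX hY).1.eigenvalues i) := by
    unfold tgm
    rw [trace_sqrt_eq']
    rw [← Complex.ofReal_sum, Complex.ofReal_re]
  rw [← hμdef] at hsum
  rw [htgm, htdef]
  exact hsum
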